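/- Let g = (g₁,…,g_m) be a tuple of holomorphic functions on an open set U ⊂ ℂⁿ with δ₀ ≤ |g(z)|² := Σ_k |g_k(z)|² ≤ M for all z ∈ U, where 0 < δ₀ ≤ M, let f be holomorphic on U, and set v_{kμ} := f · ∂(ḡ_k/|g|²)/∂z̄_μ. Then there is a constant C depending only on m, δ₀ and M such that for every z ∈ U, every 1 ≤ k ≤ m, 1 ≤ ν ≤ n, and every ξ ∈ ℂⁿ: | Σ_{μ=1}^n (∂v_{kμ}/∂z_ν)(z) ξ_μ |² ≤ C (|∂f(z)|² + |f(z)|² |∂g(z)|²) Σ_{j=1}^m | Σ_{μ=1}^n (g_j ∂g_k/∂z_μ − g_k ∂g_j/∂z_μ)(z) ξ̄_μ |², where |∂f|² := Σ_μ |∂f/∂z_μ|² and |∂g|² := Σ_k Σ_μ |∂g_k/∂z_μ|². -/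

import Mathlib

open MeasureTheory Filter Complex Set Bornology ENNReal

noncomputable section

/-- ℂⁿ with the Euclidean metric. -/
abbrev Cn (n : ℕ) : Type := EuclideanSpace ℂ (Fin n)


instance {n : ℕ} : MeasurableSpace (Cn n) := borel _
instance {n : ℕ} : BorelSpace (Cn n) := ⟨rfl⟩
instance {n : ℕ} : MeasureSpace (Cn n) :=
  letI : InnerProductSpace ℝ (Cn n) := InnerProductSpace.complexToReal
  measureSpaceOfInnerProductSpace

/-- The `j`-th standard basis vector of ℂⁿ. -/
def sdir {n : ℕ} (j : Fin n) : Cn n := EuclideanSpace.single j 1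

/-- Wirtinger derivative `∂f/∂z_j`. -/
def wder {n : ℕ} (j : Fin n) (f : Cn n → ℂ) (z : Cn n) : ℂ :=
  (fderiv ℝ f z (sdir j) - Complex.I * fderiv ℝ f z (Complex.I • sdir j)) / 2

/-- Conjugate Wirtinger derivative `∂f/∂z̄_j`. -/
def wbar {n : ℕ} (j : Fin n) (f : Cn n → ℂ) (z : Cn n) : ℂ :=
  (fderiv ℝ f z (sdir j) + Complex.I * fderiv ℝ f z (Complex.I • sdir j)) / 2

/-- Complex Hessian `∂²f/∂z_j∂z̄_k`. -/
def hessC {n : ℕ} (j k : Fin n) (f : Cn n → ℂ) (z : Cn n) : ℂ :=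
  wder j (fun w => wbar k f w) z

/-- Levi form `Σ_{j,k} (∂²φ/∂z_j∂z̄_k) ξ_j ξ̄_k` of a real-valued function. -/
def levi {n : ℕ} (φ : Cn n → ℝ) (z : Cn n) (ξ : Fin n → ℂ) : ℝ :=
  (∑ j, ∑ k, hessC j k (fun w => (φ w : ℂ)) z * ξ j * (starRingEnd ℂ) (ξ k)).re

/-- Euclidean Laplacian on ℂⁿ ≅ ℝ^{2n}. -/
def lap {n : ℕ} (φ : Cn n → ℝ) (z : Cn n) : ℝ :=
  ∑ j, (fderiv ℝ (fun w => fderiv ℝ φ w (sdir j)) z (sdir j)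
    + fderiv ℝ (fun w => fderiv ℝ φ w (Complex.I • sdir j)) z (Complex.I • sdir j))

/-- Squared norm of the real gradient `|∇φ|²`. -/
def gradSq {n : ℕ} (φ : Cn n → ℝ) (z : Cn n) : ℝ :=
  ∑ j, ((fderiv ℝ φ z (sdir j)) ^ 2 + (fderiv ℝ φ z (Complex.I • sdir j)) ^ 2)

/-- `ρ` is a `C²` defining function for the bounded open set `Ω ⊂ ℂⁿ`:
`ρ` is real-valued and `C²` on a neighborhood `U` of the closure of `Ω`,
`Ω = {ρ < 0}`, and `∇ρ ≠ 0` on `∂Ω`. -/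
structure IsDefining {n : ℕ} (Ω : Set (Cn n)) (ρ : Cn n → ℝ) : Prop where
  isOpen : IsOpen Ω
  bounded : IsBounded Ω
  exU : ∃ U : Set (Cn n), IsOpen U ∧ closure Ω ⊆ U ∧ ContDiffOn ℝ 2 ρ U ∧
    Ω = {z | z ∈ U ∧ ρ z < 0}
  grad_ne : ∀ z ∈ frontier Ω, fderiv ℝ ρ z ≠ 0

/-- Squared Hardy norm `‖f‖²_{H²(Ω)} = limsup_{ε→0⁺} ∫_{∂Ω_ε} |f|² dσ_ε`,
where `∂Ω_ε` carries the `(2n-1)`-dimensional Hausdorff measure. -/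
def hardySq {n : ℕ} (Ω : Set (Cn n)) (ρ : Cn n → ℝ) (f : Cn n → ℂ) : ℝ≥0∞ :=
  Filter.limsup
    (fun ε : ℝ =>
      ∫⁻ z in frontier {w | w ∈ Ω ∧ ρ w < -ε}, ENNReal.ofReal (‖f z‖ ^ 2)
        ∂ μH[2 * (n : ℝ) - 1])
    (nhdsWithin 0 (Set.Ioi 0))

/-- `f` belongs to the Hardy space `H²(Ω)`. -/
def MemHardy {n : ℕ} (Ω : Set (Cn n)) (ρ : Cn n → ℝ) (f : Cn n → ℂ) : Prop :=
  DifferentiableOn ℂ f Ω ∧ hardySq Ω ρ f < ⊤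

/-- The subdomain `Ω_ε = {z ∈ Ω : ρ(z) < -ε}`. -/
def subdom {n : ℕ} (Ω : Set (Cn n)) (ρ : Cn n → ℝ) (ε : ℝ) : Set (Cn n) :=
  {w | w ∈ Ω ∧ ρ w < -ε}

section Wirtinger
open Complex Metric

variable {n : ℕ} {z : Cn n} {j : Fin n} {f g : Cn n → ℂ}

theorem wder_congr (h : f =ᶠ[nhds z] g) : wder j f z = wder j g z := by
  unfold wder; rw [h.fderiv_eq]

theorem wder_of_hasFDerivAt {L : Cn n →L[ℝ] ℂ} (h : HasFDerivAt f L z) :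
    wder j f z = (L (sdir j) - Complex.I * L (Complex.I • sdir j)) / 2 := by
  unfold wder; rw [h.fderiv]

theorem wbar_of_hasFDerivAt {L : Cn n →L[ℝ] ℂ} (h : HasFDerivAt f L z) :
    wbar j f z = (L (sdir j) + Complex.I * L (Complex.I • sdir j)) / 2 := by
  unfold wbar; rw [h.fderiv]

theorem wbar_holo (hf : DifferentiableAt ℂ f z) : wbar j f z = 0 := by
  rw [wbar_of_hasFDerivAt (hf.hasFDerivAt.restrictScalars ℝ)]
  have h2 : (fderiv ℂ f z) (Complex.I • sdir j) = Complex.I • (fderiv ℂ f z) (sdir j) :=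
    map_smul _ _ _
  simp only [ContinuousLinearMap.coe_restrictScalars', h2, smul_eq_mul]
  linear_combination ((fderiv ℂ f z (sdir j))/2) * Complex.I_mul_I

theorem wder_holo (hf : DifferentiableAt ℂ f z) :
    wder j f z = fderiv ℂ f z (sdir j) := by
  rw [wder_of_hasFDerivAt (hf.hasFDerivAt.restrictScalars ℝ)]
  have h2 : (fderiv ℂ f z) (Complex.I • sdir j) = Complex.I • (fderiv ℂ f z) (sdir j) :=
    map_smul _ _ _
  simp only [ContinuousLinearMap.coe_restrictScalars', h2, smul_eq_mul]
  linear_combination (-(fderiv ℂ f z (sdir j))/2) * Complex.I_mul_I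

theorem wder_conj (hf : DifferentiableAt ℝ f z) :
    wder j (fun w => (starRingEnd ℂ) (f w)) z = (starRingEnd ℂ) (wbar j f z) := by
  have h : HasFDerivAt (fun w => (starRingEnd ℂ) (f w))
      ((Complex.conjCLE.toContinuousLinearMap).comp (fderiv ℝ f z)) z :=
    (Complex.conjCLE.toContinuousLinearMap.hasFDerivAt).comp z hf.hasFDerivAt
  rw [wder_of_hasFDerivAt h, wbar]
  simp only [ContinuousLinearMap.coe_comp', Function.comp_apply,
    ContinuousLinearEquiv.coe_coe, Complex.conjCLE_apply]
  rw [map_div₀, map_add, map_mul, Complex.conj_I]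
  simp only [map_ofNat]
  ring

theorem wbar_conj (hf : DifferentiableAt ℝ f z) :
    wbar j (fun w => (starRingEnd ℂ) (f w)) z = (starRingEnd ℂ) (wder j f z) := by
  have h : HasFDerivAt (fun w => (starRingEnd ℂ) (f w))
      ((Complex.conjCLE.toContinuousLinearMap).comp (fderiv ℝ f z)) z :=
    (Complex.conjCLE.toContinuousLinearMap.hasFDerivAt).comp z hf.hasFDerivAt
  rw [wbar_of_hasFDerivAt h, wder]
  simp only [ContinuousLinearMap.coe_comp', Function.comp_apply,
    ContinuousLinearEquiv.coe_coe, Complex.conjCLE_apply]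
  rw [map_div₀, map_sub, map_mul, Complex.conj_I]
  simp only [map_ofNat]
  ring

theorem wder_mul (hf : DifferentiableAt ℝ f z) (hg : DifferentiableAt ℝ g z) :
    wder j (fun w => f w * g w) z = wder j f z * g z + f z * wder j g z := by
  rw [wder_of_hasFDerivAt (hf.hasFDerivAt.fun_mul hg.hasFDerivAt),
    wder_of_hasFDerivAt hf.hasFDerivAt, wder_of_hasFDerivAt hg.hasFDerivAt]
  simp only [ContinuousLinearMap.add_apply, ContinuousLinearMap.coe_smul',
    Pi.smul_apply, smul_eq_mul]
  ring

theorem wbar_mul (hf : DifferentiableAt ℝ f z) (hg : DifferentiableAt ℝ g z) :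
    wbar j (fun w => f w * g w) z = wbar j f z * g z + f z * wbar j g z := by
  rw [wbar_of_hasFDerivAt (hf.hasFDerivAt.fun_mul hg.hasFDerivAt),
    wbar_of_hasFDerivAt hf.hasFDerivAt, wbar_of_hasFDerivAt hg.hasFDerivAt]
  simp only [ContinuousLinearMap.add_apply, ContinuousLinearMap.coe_smul',
    Pi.smul_apply, smul_eq_mul]
  ring

theorem wder_inv (hf : DifferentiableAt ℝ f z) (h0 : f z ≠ 0) :
    wder j (fun w => (f w)⁻¹) z = -((f z * f z)⁻¹) * wder j f z := by
  have hinv := ((((hasDerivAt_inv h0).hasFDerivAt).restrictScalars ℝ)).comp z hf.hasFDerivAt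
  simp only [Function.comp_def] at hinv
  rw [wder_of_hasFDerivAt hinv, wder_of_hasFDerivAt hf.hasFDerivAt]
  simp only [ContinuousLinearMap.coe_comp', Function.comp_apply,
    ContinuousLinearMap.coe_restrictScalars', ContinuousLinearMap.smulRight_apply,
    ContinuousLinearMap.one_apply, ContinuousLinearMap.toSpanSingleton_apply, smul_eq_mul]
  field_simp
  ring

theorem wbar_inv (hf : DifferentiableAt ℝ f z) (h0 : f z ≠ 0) :
    wbar j (fun w => (f w)⁻¹) z = -((f z * f z)⁻¹) * wbar j f z := by
  have hinv := ((((hasDerivAt_inv h0).hasFDerivAt).restrictScalars ℝ)).comp z hf.hasFDerivAt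
  simp only [Function.comp_def] at hinv
  rw [wbar_of_hasFDerivAt hinv, wbar_of_hasFDerivAt hf.hasFDerivAt]
  simp only [ContinuousLinearMap.coe_comp', Function.comp_apply,
    ContinuousLinearMap.coe_restrictScalars', ContinuousLinearMap.smulRight_apply,
    ContinuousLinearMap.one_apply, ContinuousLinearMap.toSpanSingleton_apply, smul_eq_mul]
  field_simp
  ring

theorem wder_sum {ι : Type*} (s : Finset ι) (F : ι → Cn n → ℂ)
    (hF : ∀ i ∈ s, DifferentiableAt ℝ (F i) z) :
    wder j (fun w => ∑ i ∈ s, F i w) z = ∑ i ∈ s, wder j (F i) z := by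
  have h : HasFDerivAt (fun w => ∑ i ∈ s, F i w) (∑ i ∈ s, fderiv ℝ (F i) z) z :=
    HasFDerivAt.fun_sum (fun i hi => (hF i hi).hasFDerivAt)
  rw [wder_of_hasFDerivAt h]
  simp only [ContinuousLinearMap.coe_sum', Finset.sum_apply, wder]
  rw [Finset.mul_sum, ← Finset.sum_sub_distrib, ← Finset.sum_div]

theorem wbar_sum {ι : Type*} (s : Finset ι) (F : ι → Cn n → ℂ)
    (hF : ∀ i ∈ s, DifferentiableAt ℝ (F i) z) :
    wbar j (fun w => ∑ i ∈ s, F i w) z = ∑ i ∈ s, wbar j (F i) z := by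
  have h : HasFDerivAt (fun w => ∑ i ∈ s, F i w) (∑ i ∈ s, fderiv ℝ (F i) z) z :=
    HasFDerivAt.fun_sum (fun i hi => (hF i hi).hasFDerivAt)
  rw [wbar_of_hasFDerivAt h]
  simp only [ContinuousLinearMap.coe_sum', Finset.sum_apply, wbar]
  rw [Finset.mul_sum, ← Finset.sum_add_distrib, ← Finset.sum_div]

end Wirtinger

section Helpers
variable {n : ℕ} {z : Cn n} {f : Cn n → ℂ}

theorem diff_conj (hf : DifferentiableAt ℝ f z) :
    DifferentiableAt ℝ (fun w => (starRingEnd ℂ) (f w)) z := by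
  have := (Complex.conjCLE.differentiable.differentiableAt (x := f z)).comp z hf
  simpa [Function.comp_def] using this

theorem diff_inv (hf : DifferentiableAt ℝ f z) (h0 : f z ≠ 0) :
    DifferentiableAt ℝ (fun w => (f w)⁻¹) z := by
  have h := ((((hasDerivAt_inv h0).hasFDerivAt).restrictScalars ℝ)).comp z hf.hasFDerivAt
  simp only [Function.comp_def] at h
  exact h.differentiableAt

end Helpers
section Regularity
set_option maxHeartbeats 1000000
set_option synthInstance.maxHeartbeats 400000
open Complex Metric MeasureTheory intervalIntegral
open scoped Real

variable {n : ℕ}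

theorem slice_hasDerivAt {g : Cn n → ℂ} {x u : Cn n} {t : ℂ}
    (hg : DifferentiableAt ℂ g (x + t • u)) :
    HasDerivAt (fun s : ℂ => g (x + s • u)) (fderiv ℂ g (x + t • u) u) t := by
  have hl : HasDerivAt (fun s : ℂ => x + s • u) u t := by
    simpa using ((hasDerivAt_id t).smul_const u).const_add x
  simpa [Function.comp_def] using (hg.hasFDerivAt.comp_hasDerivAt t hl)

theorem holo_deriv_differentiableAt {U : Set (Cn n)} (hU : IsOpen U) {g : Cn n → ℂ}
    (hg : DifferentiableOn ℂ g U) {z : Cn n} (hz : z ∈ U) {v : Cn n} (hv : ‖v‖ ≤ 1) :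
    DifferentiableAt ℂ (fun w => fderiv ℂ g w v) z := by
  have hdist : ∀ (x : Cn n) (t : ℂ) (u : Cn n), dist (x + t • u) x = ‖t‖ * ‖u‖ := by
    intro x t u; rw [dist_eq_norm]; simp [norm_smul]
  obtain ⟨ε, hε, hball⟩ := Metric.isOpen_iff.mp hU z hz
  set r : ℝ := ε / 8 with hrdef
  have hr : 0 < r := by positivity
  have h4 : closedBall z (4 * r) ⊆ U :=
    subset_trans (closedBall_subset_ball (by rw [hrdef]; linarith)) hball
  have hga : ∀ {x : Cn n}, x ∈ closedBall z (4 * r) → DifferentiableAt ℂ g x :=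
    fun hx => hg.differentiableAt (hU.mem_nhds (h4 hx))
  obtain ⟨M, hM⟩ := (isCompact_closedBall z (4 * r)).exists_bound_of_continuousOn
    (hg.continuousOn.mono h4)
  have hM0 : 0 ≤ M :=
    le_trans (norm_nonneg _) (hM z (mem_closedBall_self (by positivity)))
  -- derivative bound on closedBall z (2r)
  have hdb : ∀ x ∈ closedBall z (2 * r), ∀ u : Cn n, ‖fderiv ℂ g x u‖ ≤ M / r * ‖u‖ := by
    intro x hx u
    rcases eq_or_ne u 0 with h | h
    · simp [h]
    set ρ : ℝ := r / ‖u‖ with hρdef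
    have hu : 0 < ‖u‖ := norm_pos_iff.mpr h
    have hρ : 0 < ρ := div_pos hr hu
    have hmem : ∀ t : ℂ, ‖t‖ ≤ 2 * ρ → x + t • u ∈ closedBall z (4 * r) := by
      intro t ht
      rw [mem_closedBall]
      have h2 : ‖t‖ * ‖u‖ ≤ 2 * r := by
        have : 2 * ρ * ‖u‖ = 2 * r := by rw [hρdef]; field_simp
        nlinarith [norm_nonneg t]
      calc dist (x + t • u) z ≤ dist (x + t • u) x + dist x z := dist_triangle _ _ _
        _ ≤ ‖t‖ * ‖u‖ + 2 * r := by rw [hdist]; exact add_le_add_right (mem_closedBall.mp hx) _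
        _ ≤ 4 * r := by linarith
    have hφd : DifferentiableOn ℂ (fun t : ℂ => g (x + t • u)) (ball (0 : ℂ) (2 * ρ)) := by
      intro t ht
      have htm : x + t • u ∈ closedBall z (4 * r) := by
        refine hmem t ?_
        have := mem_ball_iff_norm.mp ht
        simpa using this.le
      exact ((slice_hasDerivAt (hga htm)).differentiableAt).differentiableWithinAt
    have hx0 : x + (0 : ℂ) • u = x := by simp
    have h0 : HasDerivAt (fun t : ℂ => g (x + t • u)) (fderiv ℂ g x u) 0 := by
      have hmem0 : x + (0:ℂ) • u ∈ closedBall z (4 * r) := by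
        refine hmem 0 (by rw [norm_zero]; positivity)
      have := slice_hasDerivAt (x := x) (u := u) (t := (0:ℂ)) (hga hmem0)
      rwa [hx0] at this
    have hcd := Complex.cderiv_eq_deriv isOpen_ball hφd hρ
      (closedBall_subset_ball (by linarith))
    have hb : ‖Complex.cderiv ρ (fun t : ℂ => g (x + t • u)) 0‖ ≤ M / ρ := by
      refine Complex.norm_cderiv_le hρ ?_
      intro t ht
      refine hM _ (hmem t ?_)
      have h1 : dist t 0 = ρ := ht
      rw [dist_zero_right] at h1
      rw [h1]; linarith
    rw [hcd, h0.deriv] at hb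
    calc ‖fderiv ℂ g x u‖ ≤ M / ρ := hb
      _ = M / r * ‖u‖ := by rw [hρdef]; field_simp
  have hop : ∀ x ∈ closedBall z (2 * r), ‖fderiv ℂ g x‖ ≤ M / r := fun x hx =>
    ContinuousLinearMap.opNorm_le_bound _ (by positivity) (hdb x hx)
  -- membership for the representation
  have hmem' : ∀ w ∈ ball z r, ∀ t : ℂ, ‖t‖ ≤ r → w + t • v ∈ closedBall z (2 * r) := by
    intro w hw t ht
    rw [mem_closedBall]
    have h2 : ‖t‖ * ‖v‖ ≤ r := by nlinarith [norm_nonneg t]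
    calc dist (w + t • v) z ≤ dist (w + t • v) w + dist w z := dist_triangle _ _ _
      _ ≤ ‖t‖ * ‖v‖ + r := by
          rw [hdist]; exact add_le_add_right (mem_ball.mp hw).le _
      _ ≤ 2 * r := by linarith
  have h24 : closedBall z (2 * r) ⊆ closedBall z (4 * r) :=
    closedBall_subset_closedBall (by linarith)
  -- the parametric integrand
  set F : Cn n → ℝ → ℂ := fun w θ =>
    deriv (circleMap 0 r) θ • ((circleMap 0 r θ - 0) ^ 2)⁻¹ • g (w + circleMap 0 r θ • v)
    with hFdef
  have hcnorm : ∀ θ : ℝ, ‖circleMap 0 r θ‖ = r := by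
    intro θ
    rw [norm_circleMap_zero, abs_of_pos hr]
  -- integral representation on ball z r
  have hrep : ∀ w ∈ ball z r, fderiv ℂ g w v
      = (2 * π * Complex.I : ℂ)⁻¹ • ∫ θ in (0:ℝ)..(2*π), F w θ := by
    intro w hw
    have hφd : DifferentiableOn ℂ (fun t : ℂ => g (w + t • v)) (ball (0 : ℂ) (2 * r)) := by
      intro t ht
      have htm : w + t • v ∈ closedBall z (4 * r) := by
        rw [mem_closedBall]
        have h1 := mem_ball_iff_norm.mp ht
        rw [sub_zero] at h1
        have h2 : ‖t‖ * ‖v‖ ≤ 2 * r := by nlinarith [norm_nonneg t]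
        calc dist (w + t • v) z ≤ dist (w + t • v) w + dist w z := dist_triangle _ _ _
          _ ≤ ‖t‖ * ‖v‖ + r := by rw [hdist]; exact add_le_add_right (mem_ball.mp hw).le _
          _ ≤ 4 * r := by linarith
      exact ((slice_hasDerivAt (hga htm)).differentiableAt).differentiableWithinAt
    have hx0 : w + (0 : ℂ) • v = w := by simp
    have h0 : HasDerivAt (fun t : ℂ => g (w + t • v)) (fderiv ℂ g w v) 0 := by
      have hmem0 : w + (0:ℂ) • v ∈ closedBall z (4 * r) :=
        h24 (hmem' w hw 0 (by rw [norm_zero]; positivity))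
      have := slice_hasDerivAt (x := w) (u := v) (t := (0:ℂ)) (hga hmem0)
      rwa [hx0] at this
    have hcd := Complex.cderiv_eq_deriv isOpen_ball hφd hr
      (closedBall_subset_ball (by linarith))
    rw [h0.deriv] at hcd
    rw [← hcd]
    unfold Complex.cderiv circleIntegral
    rfl
  -- differentiability of the parametric integral
  set μ : Measure ℝ := volume.restrict (Set.Ioc (0:ℝ) (2*π)) with hμdef
  set F' : Cn n → ℝ → (Cn n →L[ℂ] ℂ) := fun w θ =>
    deriv (circleMap 0 r) θ • ((circleMap 0 r θ - 0) ^ 2)⁻¹ •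
      fderiv ℂ g (w + circleMap 0 r θ • v) with hF'def
  have hcont : ∀ w ∈ ball z r, Continuous (fun θ => F w θ) := by
    intro w hw
    rw [hFdef]
    have hc1 : Continuous (fun θ : ℝ => deriv (circleMap 0 r) θ) := by
      simp only [deriv_circleMap]
      exact (continuous_circleMap 0 r).mul continuous_const
    have hc2 : Continuous (fun θ : ℝ => ((circleMap 0 r θ - 0) ^ 2)⁻¹) := by
      refine Continuous.inv₀ (((continuous_circleMap 0 r).sub continuous_const).pow 2) ?_
      intro θ
      refine pow_ne_zero _ ?_
      rw [sub_zero]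
      exact circleMap_ne_center hr.ne'
    have hc3 : Continuous (fun θ : ℝ => g (w + circleMap 0 r θ • v)) := by
      refine (hg.continuousOn.mono h4).comp_continuous (continuous_const.add ((continuous_circleMap 0 r).smul continuous_const)) ?_
      intro θ
      exact h24 (hmem' w hw _ (by rw [hcnorm]))
    exact hc1.smul (hc2.smul hc3)
  have hInt : HasFDerivAt (fun w => ∫ θ, F w θ ∂μ) (∫ θ, F' z θ ∂μ) z := by
    haveI : SecondCountableTopology (Cn n →L[ℂ] ℂ) := inferInstance
    refine hasFDerivAt_integral_of_dominated_of_fderiv_le (s := ball z r)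
      (bound := fun _ => r * ((r^2)⁻¹ * (M / r))) (ball_mem_nhds z hr) ?_ ?_ ?_ ?_ ?_ ?_
    · filter_upwards [ball_mem_nhds z hr] with w hw
      exact (hcont w hw).aestronglyMeasurable
    · exact (hcont z (mem_ball_self hr)).integrableOn_Ioc
    · have hm : Measurable (fun θ : ℝ => fderiv ℂ g (z + circleMap 0 r θ • v)) :=
        (measurable_fderiv ℂ g).comp
          (continuous_const.add ((continuous_circleMap 0 r).smul continuous_const)).measurable
      refine AEStronglyMeasurable.fun_smul ?_ (AEStronglyMeasurable.fun_smul ?_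
        hm.stronglyMeasurable.aestronglyMeasurable)
      · have : Continuous (fun θ : ℝ => deriv (circleMap 0 r) θ) := by
          simp only [deriv_circleMap]
          exact (continuous_circleMap 0 r).mul continuous_const
        exact this.aestronglyMeasurable
      · have : Continuous (fun θ : ℝ => ((circleMap 0 r θ - 0) ^ 2)⁻¹) := by
          refine Continuous.inv₀ (((continuous_circleMap 0 r).sub continuous_const).pow 2) ?_
          intro θ
          refine pow_ne_zero _ ?_
          rw [sub_zero]
          exact circleMap_ne_center hr.ne'
        exact this.aestronglyMeasurable
    · refine Filter.Eventually.of_forall (fun θ => ?_)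
      intro w hw
      have hmemw : w + circleMap 0 r θ • v ∈ closedBall z (2 * r) :=
        hmem' w hw _ (le_of_eq (hcnorm θ))
      simp only [hF'def]
      have e1 : ‖deriv (circleMap 0 r) θ‖ = r := by
        rw [deriv_circleMap]
        rw [norm_mul]
        simp [hcnorm θ]
      have e2 : ‖((circleMap 0 r θ - 0) ^ 2)⁻¹‖ = (r ^ 2)⁻¹ := by
        rw [sub_zero, norm_inv, norm_pow, hcnorm θ]
      calc ‖deriv (circleMap 0 r) θ • ((circleMap 0 r θ - 0) ^ 2)⁻¹ •
              fderiv ℂ g (w + circleMap 0 r θ • v)‖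
          ≤ ‖deriv (circleMap 0 r) θ‖ * ‖((circleMap 0 r θ - 0) ^ 2)⁻¹ •
              fderiv ℂ g (w + circleMap 0 r θ • v)‖ := norm_smul_le _ _
        _ ≤ ‖deriv (circleMap 0 r) θ‖ * (‖((circleMap 0 r θ - 0) ^ 2)⁻¹‖ *
              ‖fderiv ℂ g (w + circleMap 0 r θ • v)‖) :=
            mul_le_mul_of_nonneg_left (norm_smul_le _ _) (norm_nonneg _)
        _ ≤ r * ((r ^ 2)⁻¹ * (M / r)) := by
            rw [e1, e2]
            gcongr
            exact hop _ hmemw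
    · exact (integrableOn_const measure_Ioc_lt_top.ne)
    · refine Filter.Eventually.of_forall (fun θ => ?_)
      intro w hw
      have hmemw : w + circleMap 0 r θ • v ∈ closedBall z (4 * r) :=
        h24 (hmem' w hw _ (le_of_eq (hcnorm θ)))
      have h1 : HasFDerivAt (fun w' : Cn n => g (w' + circleMap 0 r θ • v))
          (fderiv ℂ g (w + circleMap 0 r θ • v)) w := by
        have h2 := (hga hmemw).hasFDerivAt.comp w
          ((hasFDerivAt_id w).add_const (circleMap 0 r θ • v))
        simpa [Function.comp_def] using h2
      exact (h1.fun_const_smul _).fun_const_smul _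
  have hGd : DifferentiableAt ℂ (fun w => (2 * π * Complex.I : ℂ)⁻¹ • ∫ θ, F w θ ∂μ) z :=
    hInt.differentiableAt.fun_const_smul _
  refine hGd.congr_of_eventuallyEq ?_
  filter_upwards [ball_mem_nhds z hr] with w hw
  rw [hrep w hw, intervalIntegral.integral_of_le (by positivity)]

end Regularity
section MainProof
set_option maxHeartbeats 2000000
set_option synthInstance.maxHeartbeats 400000
open Complex Metric

/-- **Derivative bound (4.6)/(4.7)**. With `v_{kμ} = f ∂(ḡ_k/|g|²)/∂z̄_μ` and
`δ₀ ≤ |g|² ≤ M`, there is `C = C(m, δ₀, M)` such that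
`|Σ_μ (∂v_{kμ}/∂z_ν) ξ_μ|² ≤ C (|∂f|² + |f|²|∂g|²) Σ_j |Σ_μ (g_j∂g_k/∂z_μ - g_k∂g_j/∂z_μ) ξ̄_μ|²`. -/
theorem v_derivative_bound (m : ℕ) (δ₀ M : ℝ) (hδ₀ : 0 < δ₀) (hδM : δ₀ ≤ M) :
    ∃ C : ℝ, 0 < C ∧
      ∀ (n : ℕ) (U : Set (Cn n)), IsOpen U →
      ∀ g : Fin m → Cn n → ℂ, (∀ k, DifferentiableOn ℂ (g k) U) →
      (∀ z ∈ U, δ₀ ≤ ∑ k, ‖g k z‖ ^ 2) → (∀ z ∈ U, ∑ k, ‖g k z‖ ^ 2 ≤ M) →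
      ∀ f : Cn n → ℂ, DifferentiableOn ℂ f U →
      ∀ z ∈ U, ∀ (k : Fin m) (ν : Fin n) (ξ : Fin n → ℂ),
        ‖∑ μ, wder ν (fun w => f w * wbar μ
            (fun w' => (starRingEnd ℂ) (g k w') / ((∑ i, ‖g i w'‖ ^ 2 : ℝ) : ℂ)) w) z
          * ξ μ‖ ^ 2
        ≤ C * ((∑ μ, ‖wder μ f z‖ ^ 2) + ‖f z‖ ^ 2 * ∑ i, ∑ μ, ‖wder μ (g i) z‖ ^ 2) *
          ∑ j, ‖∑ μ, (g j z * wder μ (g k) z - g k z * wder μ (g j) z)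
            * (starRingEnd ℂ) (ξ μ)‖ ^ 2 := by
  have hM0 : 0 < M := lt_of_lt_of_le hδ₀ hδM
  set C₀ : ℝ := 3 * (M * (δ₀⁻¹)^4 + 4 * M^2 * (δ₀⁻¹)^6 + (δ₀⁻¹)^4) with hC₀def
  have hC₀ : 0 < C₀ := by positivity
  refine ⟨m * C₀ + 1, by positivity, ?_⟩
  intro n U hU g hgd hlow hupp f hfd z hzU k ν ξ
  -- basic objects
  set h : Cn n → ℂ := fun w => ∑ i, g i w * (starRingEnd ℂ) (g i w) with hhdef
  set dg : Fin m → Fin n → Cn n → ℂ := fun i μ w => fderiv ℂ (g i) w (sdir μ) with hdgdef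
  set A : Fin m → Fin n → Cn n → ℂ := fun i μ w =>
    (starRingEnd ℂ) (g i w * dg k μ w - g k w * dg i μ w) with hAdef
  set R : Fin m → Cn n → ℂ := fun i w => f w * ((h w)⁻¹ * (h w)⁻¹) * g i w with hRdef
  -- differentiability facts
  have hgA : ∀ i, ∀ w ∈ U, DifferentiableAt ℂ (g i) w :=
    fun i w hw => (hgd i).differentiableAt (hU.mem_nhds hw)
  have hfA : DifferentiableAt ℂ f z := hfd.differentiableAt (hU.mem_nhds hzU)
  have hgR : ∀ i, ∀ w ∈ U, DifferentiableAt ℝ (g i) w :=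
    fun i w hw => (hgA i w hw).restrictScalars ℝ
  have hhR : ∀ w ∈ U, DifferentiableAt ℝ h w := by
    intro w hw
    exact DifferentiableAt.fun_sum fun i _ => (hgR i w hw).mul (diff_conj (hgR i w hw))
  have hcast : ∀ w, ((∑ i, ‖g i w‖ ^ 2 : ℝ) : ℂ) = h w := by
    intro w
    rw [Complex.ofReal_sum]
    refine Finset.sum_congr rfl fun i _ => ?_
    rw [Complex.mul_conj]
    norm_cast
    rw [Complex.normSq_eq_norm_sq]
  have hne : ∀ w ∈ U, h w ≠ 0 := by
    intro w hw
    rw [← hcast w]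
    exact_mod_cast ne_of_gt (lt_of_lt_of_le hδ₀ (hlow w hw))
  have hinvR : ∀ w ∈ U, DifferentiableAt ℝ (fun w' => (h w')⁻¹) w :=
    fun w hw => diff_inv (hhR w hw) (hne w hw)
  have hsdir : ∀ μ : Fin n, ‖sdir μ‖ ≤ 1 := by
    intro μ
    rw [sdir, EuclideanSpace.norm_single]
    simp
  have hdgA : ∀ i μ, DifferentiableAt ℂ (dg i μ) z :=
    fun i μ => holo_deriv_differentiableAt hU (hgd i) hzU (hsdir μ)
  have hwder_g : ∀ i μ, ∀ w ∈ U, wder μ (g i) w = dg i μ w :=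
    fun i μ w hw => wder_holo (hgA i w hw)
  -- pointwise formula for wbar of h
  have hwbar_h : ∀ μ, ∀ w ∈ U, wbar μ h w = ∑ i, g i w * (starRingEnd ℂ) (dg i μ w) := by
    intro μ w hw
    rw [hhdef]
    rw [wbar_sum Finset.univ (fun i w' => g i w' * (starRingEnd ℂ) (g i w'))
      (fun i _ => (hgR i w hw).mul (diff_conj (hgR i w hw)))]
    refine Finset.sum_congr rfl fun i _ => ?_
    rw [wbar_mul (hgR i w hw) (diff_conj (hgR i w hw)), wbar_holo (hgA i w hw),
      wbar_conj (hgR i w hw), hwder_g i μ w hw]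
    ring
  -- the key function-level identity
  have hEq : ∀ μ : Fin n, ∀ w ∈ U,
      f w * wbar μ (fun w' => (starRingEnd ℂ) (g k w') / ((∑ i, ‖g i w'‖ ^ 2 : ℝ) : ℂ)) w
      = ∑ i, R i w * A i μ w := by
    intro μ w hw
    have hq : (fun w' => (starRingEnd ℂ) (g k w') / ((∑ i, ‖g i w'‖ ^ 2 : ℝ) : ℂ))
        = fun w' => (starRingEnd ℂ) (g k w') * (h w')⁻¹ := by
      funext w'
      rw [div_eq_mul_inv, hcast w']
    rw [hq]
    rw [wbar_mul (diff_conj (hgR k w hw)) (hinvR w hw)]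
    rw [wbar_conj (hgR k w hw), hwder_g k μ w hw]
    rw [wbar_inv (hhR w hw) (hne w hw)]
    rw [hwbar_h μ w hw]
    -- now pure algebra
    have hkey : ∀ i : Fin m, R i w * A i μ w =
        (f w * ((h w)⁻¹ * (h w)⁻¹) * (starRingEnd ℂ) (dg k μ w))
          * (g i w * (starRingEnd ℂ) (g i w))
        - (f w * ((h w)⁻¹ * (h w)⁻¹) * (starRingEnd ℂ) (g k w))
          * (g i w * (starRingEnd ℂ) (dg i μ w)) := by
      intro i
      simp only [hRdef, hAdef, map_sub, map_mul]
      ring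
    have hS1 : (∑ i, g i w * (starRingEnd ℂ) (g i w)) = h w := rfl
    have hsum1 : ∑ i, R i w * A i μ w
        = (f w * ((h w)⁻¹ * (h w)⁻¹) * (starRingEnd ℂ) (dg k μ w)) * h w
        - (f w * ((h w)⁻¹ * (h w)⁻¹) * (starRingEnd ℂ) (g k w))
          * ∑ i, g i w * (starRingEnd ℂ) (dg i μ w) := by
      rw [Finset.sum_congr rfl (fun i _ => hkey i), Finset.sum_sub_distrib,
        ← Finset.mul_sum, ← Finset.mul_sum, hS1]
    rw [hsum1]
    field_simp [hne w hw]
    ring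
  -- differentiability at z of the pieces
  have hfR : DifferentiableAt ℝ f z := hfA.restrictScalars ℝ
  have hinvz : DifferentiableAt ℝ (fun w => (h w)⁻¹) z := hinvR z hzU
  have hRd : ∀ i, DifferentiableAt ℝ (R i) z :=
    fun i => (hfR.mul (hinvz.mul hinvz)).mul (hgR i z hzU)
  have hphiA : ∀ i μ, DifferentiableAt ℂ
      (fun w => g i w * dg k μ w - g k w * dg i μ w) z :=
    fun i μ => ((hgA i z hzU).mul (hdgA k μ)).sub ((hgA k z hzU).mul (hdgA i μ))
  have hAd : ∀ i μ, DifferentiableAt ℝ (A i μ) z :=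
    fun i μ => diff_conj ((hphiA i μ).restrictScalars ℝ)
  have hAz : ∀ i μ, wder ν (A i μ) z = 0 := by
    intro i μ
    simp only [hAdef]
    rw [wder_conj ((hphiA i μ).restrictScalars ℝ), wbar_holo (hphiA i μ), map_zero]
  -- derivative of each LHS summand
  have hwderL : ∀ μ : Fin n,
      wder ν (fun w => f w * wbar μ
        (fun w' => (starRingEnd ℂ) (g k w') / ((∑ i, ‖g i w'‖ ^ 2 : ℝ) : ℂ)) w) z
      = ∑ i, wder ν (R i) z * A i μ z := by
    intro μ
    have h1 := wder_congr (j := ν)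
      (Filter.eventuallyEq_of_mem (hU.mem_nhds hzU) (fun w hw => hEq μ w hw))
    rw [h1, wder_sum Finset.univ (fun i w => R i w * A i μ w)
      (fun i _ => (hRd i).mul (hAd i μ))]
    refine Finset.sum_congr rfl fun i _ => ?_
    rw [wder_mul (hRd i) (hAd i μ), hAz i μ]
    ring
  -- explicit formula for wder ν (R i) z
  have hwder_h : wder ν h z = ∑ j, dg j ν z * (starRingEnd ℂ) (g j z) := by
    rw [hhdef]
    rw [wder_sum Finset.univ (fun i w' => g i w' * (starRingEnd ℂ) (g i w'))
      (fun i _ => (hgR i z hzU).mul (diff_conj (hgR i z hzU)))]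
    refine Finset.sum_congr rfl fun i _ => ?_
    rw [wder_mul (hgR i z hzU) (diff_conj (hgR i z hzU)), wder_conj (hgR i z hzU),
      wbar_holo (hgA i z hzU), map_zero, hwder_g i ν z hzU]
    ring
  have hwinv2 : wder ν (fun w => (h w)⁻¹ * (h w)⁻¹) z
      = 2 * (h z)⁻¹ * (-((h z * h z)⁻¹) * wder ν h z) := by
    rw [wder_mul hinvz hinvz, wder_inv (hhR z hzU) (hne z hzU)]
    ring
  have hB : ∀ i, wder ν (R i) z
      = wder ν f z * ((h z)⁻¹ * (h z)⁻¹) * g i z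
      + f z * (2 * (h z)⁻¹ * (-((h z * h z)⁻¹) * wder ν h z)) * g i z
      + f z * ((h z)⁻¹ * (h z)⁻¹) * dg i ν z := by
    intro i
    have h2 : wder ν (R i) z = wder ν (fun w => f w * ((h w)⁻¹ * (h w)⁻¹)) z * g i z
        + (f z * ((h z)⁻¹ * (h z)⁻¹)) * wder ν (g i) z := by
      simp only [hRdef]
      exact wder_mul (hfR.mul (hinvz.mul hinvz)) (hgR i z hzU)
    rw [h2, wder_mul hfR (hinvz.fun_mul hinvz), hwinv2, hwder_g i ν z hzU]
    ring
  -- real quantities and bounds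
  set Sf : ℝ := ∑ μ, ‖wder μ f z‖ ^ 2 with hSfdef
  set Sg : ℝ := ∑ i, ∑ μ, ‖wder μ (g i) z‖ ^ 2 with hSgdef
  set F0 : ℝ := ‖f z‖ with hF0def
  set d : ℝ := δ₀⁻¹ with hddef
  have hd0 : 0 < d := by positivity
  have hSf0 : 0 ≤ Sf := Finset.sum_nonneg fun μ _ => by positivity
  have hSg0 : 0 ≤ Sg := Finset.sum_nonneg fun i _ => Finset.sum_nonneg fun μ _ => by positivity
  have hnh : ‖h z‖ = ∑ i, ‖g i z‖ ^ 2 := by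
    rw [← hcast z, Complex.norm_real]
    exact abs_of_pos (lt_of_lt_of_le hδ₀ (hlow z hzU))
  have hcle : ‖(h z)⁻¹‖ ≤ d := by
    rw [norm_inv, hnh, hddef]
    exact inv_anti₀ hδ₀ (hlow z hzU)
  have hc0 : (0:ℝ) ≤ ‖(h z)⁻¹‖ := norm_nonneg _
  have hx1 : ‖wder ν f z‖ ^ 2 ≤ Sf :=
    Finset.single_le_sum (f := fun μ => ‖wder μ f z‖ ^ 2) (fun μ _ => by positivity)
      (Finset.mem_univ ν)
  have hx2 : ∀ i, ‖g i z‖ ^ 2 ≤ M :=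
    fun i => le_trans (Finset.single_le_sum (f := fun i => ‖g i z‖ ^ 2)
      (fun i _ => by positivity) (Finset.mem_univ i)) (hupp z hzU)
  have hx4 : ∀ i μ', ‖dg i μ' z‖ ^ 2 ≤ Sg := by
    intro i μ'
    rw [← hwder_g i μ' z hzU]
    refine le_trans (Finset.single_le_sum (f := fun μ'' => ‖wder μ'' (g i) z‖ ^ 2)
      (fun _ _ => by positivity) (Finset.mem_univ μ')) ?_
    exact Finset.single_le_sum (f := fun i' => ∑ μ'', ‖wder μ'' (g i') z‖ ^ 2)
      (fun i' _ => Finset.sum_nonneg fun _ _ => by positivity) (Finset.mem_univ i)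
  have hx3 : ‖wder ν h z‖ ^ 2 ≤ M * Sg := by
    rw [hwder_h]
    have e1 : ‖∑ j, dg j ν z * (starRingEnd ℂ) (g j z)‖
        ≤ ∑ j, ‖dg j ν z‖ * ‖g j z‖ := by
      refine (norm_sum_le _ _).trans (le_of_eq (Finset.sum_congr rfl fun j _ => ?_))
      rw [norm_mul, RCLike.norm_conj]
    have e2 : (∑ j, ‖dg j ν z‖ * ‖g j z‖) ^ 2
        ≤ (∑ j, ‖dg j ν z‖ ^ 2) * ∑ j, ‖g j z‖ ^ 2 :=
      Finset.sum_mul_sq_le_sq_mul_sq _ _ _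
    have e3 : (∑ j, ‖dg j ν z‖ ^ 2) ≤ Sg := by
      rw [hSgdef]
      refine Finset.sum_le_sum fun j _ => ?_
      rw [← hwder_g j ν z hzU]
      exact Finset.single_le_sum (f := fun μ'' => ‖wder μ'' (g j) z‖ ^ 2)
        (fun _ _ => by positivity) (Finset.mem_univ ν)
    have e4 : (∑ j, ‖g j z‖ ^ 2) ≤ M := hupp z hzU
    have e5 : (0:ℝ) ≤ ∑ j, ‖dg j ν z‖ * ‖g j z‖ :=
      Finset.sum_nonneg fun j _ => by positivity
    have e6 := pow_le_pow_left₀ (norm_nonneg _) e1 2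
    have e7 : (0:ℝ) ≤ ∑ j, ‖dg j ν z‖ ^ 2 :=
      Finset.sum_nonneg fun j _ => by positivity
    have e8 : (0:ℝ) ≤ ∑ j, ‖g j z‖ ^ 2 :=
      Finset.sum_nonneg fun j _ => by positivity
    nlinarith [mul_le_mul e3 e4 e8 hSg0]
  -- bound on each coefficient
  have hBb : ∀ i, ‖wder ν (R i) z‖ ^ 2 ≤ C₀ * (Sf + F0 ^ 2 * Sg) := by
    intro i
    set c : ℝ := ‖(h z)⁻¹‖ with hcdef2
    set x1 : ℝ := ‖wder ν f z‖
    set x2 : ℝ := ‖g i z‖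
    set x3 : ℝ := ‖wder ν h z‖
    set x4 : ℝ := ‖dg i ν z‖
    have hstep : ‖wder ν (R i) z‖ ≤ d*d*(x1*x2) + 2*(d*d*d)*(F0*x3*x2) + d*d*(F0*x4) := by
      rw [hB i]
      refine (norm_add₃_le).trans ?_
      have e1 : ‖wder ν f z * ((h z)⁻¹ * (h z)⁻¹) * g i z‖ = x1 * (c * c) * x2 := by
        rw [norm_mul, norm_mul, norm_mul]
      have e2 : ‖f z * (2 * (h z)⁻¹ * (-((h z * h z)⁻¹) * wder ν h z)) * g i z‖
          = F0 * (2 * c * (c * c * x3)) * x2 := by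
        rw [show -((h z * h z)⁻¹) * wder ν h z
            = -(((h z)⁻¹ * (h z)⁻¹) * wder ν h z) by rw [mul_inv]; ring]
        rw [norm_mul, norm_mul, norm_mul, norm_neg, norm_mul, norm_mul]
        have h2n : ‖(2:ℂ)‖ = 2 := by norm_num
        rw [h2n, norm_mul]
      have e3 : ‖f z * ((h z)⁻¹ * (h z)⁻¹) * dg i ν z‖ = F0 * (c * c) * x4 := by
        rw [norm_mul, norm_mul, norm_mul]
      rw [e1, e2, e3]
      have hx10 : 0 ≤ x1 := norm_nonneg _
      have hx20 : 0 ≤ x2 := norm_nonneg _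
      have hx30 : 0 ≤ x3 := norm_nonneg _
      have hx40 : 0 ≤ x4 := norm_nonneg _
      have hF00 : 0 ≤ F0 := norm_nonneg _
      have hcc : c * c ≤ d * d := mul_le_mul hcle hcle hc0 hd0.le
      have hccc : c * c * c ≤ d * d * d :=
        mul_le_mul hcc hcle hc0 (mul_nonneg hd0.le hd0.le)
      have t1 : x1 * (c * c) * x2 ≤ d * d * (x1 * x2) := by
        calc x1 * (c * c) * x2 = (c * c) * (x1 * x2) := by ring
          _ ≤ (d * d) * (x1 * x2) :=
              mul_le_mul_of_nonneg_right hcc (mul_nonneg hx10 hx20)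
      have t2 : F0 * (2 * c * (c * c * x3)) * x2 ≤ 2*(d*d*d)*(F0*x3*x2) := by
        calc F0 * (2 * c * (c * c * x3)) * x2 = (c*c*c) * (2 * (F0 * x3 * x2)) := by ring
          _ ≤ (d*d*d) * (2 * (F0 * x3 * x2)) := by
              refine mul_le_mul_of_nonneg_right hccc ?_
              have := mul_nonneg (mul_nonneg hF00 hx30) hx20
              linarith
          _ = 2*(d*d*d)*(F0*x3*x2) := by ring
      have t3 : F0 * (c * c) * x4 ≤ d*d*(F0*x4) := by
        calc F0 * (c * c) * x4 = (c * c) * (F0 * x4) := by ring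
          _ ≤ (d * d) * (F0 * x4) :=
              mul_le_mul_of_nonneg_right hcc (mul_nonneg hF00 hx40)
      linarith
    have hY2 := pow_le_pow_left₀ (norm_nonneg _) hstep 2
    refine le_trans hY2 ?_
    set u1 : ℝ := x1 * x2
    set u2 : ℝ := F0 * x3 * x2
    set u3 : ℝ := F0 * x4
    have hu10 : 0 ≤ u1 := mul_nonneg (norm_nonneg _) (norm_nonneg _)
    have hu20 : 0 ≤ u2 := mul_nonneg (mul_nonneg (norm_nonneg _) (norm_nonneg _)) (norm_nonneg _)
    have hu30 : 0 ≤ u3 := mul_nonneg (norm_nonneg _) (norm_nonneg _)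
    have hq1 : u1 ^ 2 ≤ Sf * M := by
      have : u1 ^ 2 = x1 ^ 2 * x2 ^ 2 := by ring
      rw [this]
      exact mul_le_mul hx1 (hx2 i) (sq_nonneg x2) hSf0
    have hq2 : u2 ^ 2 ≤ F0 ^ 2 * (M * Sg) * M := by
      have : u2 ^ 2 = F0 ^ 2 * x3 ^ 2 * x2 ^ 2 := by ring
      rw [this]
      refine mul_le_mul ?_ (hx2 i) (sq_nonneg x2)
        (mul_nonneg (sq_nonneg F0) (mul_nonneg hM0.le hSg0))
      exact mul_le_mul_of_nonneg_left hx3 (sq_nonneg F0)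
    have hq3 : u3 ^ 2 ≤ F0 ^ 2 * Sg := by
      have : u3 ^ 2 = F0 ^ 2 * x4 ^ 2 := by ring
      rw [this]
      exact mul_le_mul_of_nonneg_left (hx4 i ν) (sq_nonneg F0)
    have h3sq : (d*d*u1 + 2*(d*d*d)*u2 + d*d*u3) ^ 2
        ≤ 3 * ((d*d*u1)^2 + (2*(d*d*d)*u2)^2 + (d*d*u3)^2) := by
      nlinarith [sq_nonneg (d*d*u1 - 2*(d*d*d)*u2), sq_nonneg (d*d*u1 - d*d*u3),
        sq_nonneg (2*(d*d*d)*u2 - d*d*u3)]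
    refine le_trans h3sq ?_
    have r1 : (d*d*u1)^2 ≤ d^4 * (Sf * M) := by
      have : (d*d*u1)^2 = d^4 * u1^2 := by ring
      rw [this]
      exact mul_le_mul_of_nonneg_left hq1 (pow_nonneg hd0.le 4)
    have r2 : (2*(d*d*d)*u2)^2 ≤ 4 * d^6 * (F0 ^ 2 * (M * Sg) * M) := by
      have : (2*(d*d*d)*u2)^2 = 4 * d^6 * u2^2 := by ring
      rw [this]
      exact mul_le_mul_of_nonneg_left hq2 (by positivity)
    have r3 : (d*d*u3)^2 ≤ d^4 * (F0 ^ 2 * Sg) := by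
      have : (d*d*u3)^2 = d^4 * u3^2 := by ring
      rw [this]
      exact mul_le_mul_of_nonneg_left hq3 (pow_nonneg hd0.le 4)
    rw [hC₀def]
    have hFSg : 0 ≤ F0 ^ 2 * Sg := mul_nonneg (sq_nonneg F0) hSg0
    nlinarith [mul_nonneg (mul_nonneg (sq_nonneg M) (pow_nonneg hd0.le 6)) hSf0,
      mul_nonneg (pow_nonneg hd0.le 4) hSf0,
      mul_nonneg (mul_nonneg hM0.le (pow_nonneg hd0.le 4)) hFSg,
      mul_nonneg (pow_nonneg hd0.le 4) hFSg]
  -- the inner antiholomorphic sums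
  set T : Fin m → ℂ := fun j => ∑ μ, (g j z * dg k μ z - g k z * dg j μ z)
    * (starRingEnd ℂ) (ξ μ) with hTdef
  have hAT : ∀ i, (∑ μ, A i μ z * ξ μ) = (starRingEnd ℂ) (T i) := by
    intro i
    rw [hTdef]
    rw [map_sum]
    refine Finset.sum_congr rfl fun μ _ => ?_
    simp only [hAdef, map_mul, Complex.conj_conj]
  have hgoalL : (∑ μ, wder ν (fun w => f w * wbar μ
      (fun w' => (starRingEnd ℂ) (g k w') / ((∑ i, ‖g i w'‖ ^ 2 : ℝ) : ℂ)) w) z * ξ μ)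
      = ∑ i, wder ν (R i) z * (starRingEnd ℂ) (T i) := by
    rw [Finset.sum_congr rfl (fun μ _ => by rw [hwderL μ])]
    calc ∑ μ, (∑ i, wder ν (R i) z * A i μ z) * ξ μ
        = ∑ μ, ∑ i, wder ν (R i) z * A i μ z * ξ μ := by
          simp only [Finset.sum_mul]
      _ = ∑ i, ∑ μ, wder ν (R i) z * A i μ z * ξ μ := Finset.sum_comm
      _ = ∑ i, wder ν (R i) z * (starRingEnd ℂ) (T i) := by
          refine Finset.sum_congr rfl fun i _ => ?_
          simp only [mul_assoc]
          rw [← Finset.mul_sum, hAT i]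
  have hTgoal : ∀ j : Fin m, (∑ μ, (g j z * wder μ (g k) z - g k z * wder μ (g j) z)
      * (starRingEnd ℂ) (ξ μ)) = T j := by
    intro j
    rw [hTdef]
    exact Finset.sum_congr rfl fun μ _ => by rw [hwder_g k μ z hzU, hwder_g j μ z hzU]
  have hgoal2 : (∑ j, ‖∑ μ, (g j z * wder μ (g k) z - g k z * wder μ (g j) z)
      * (starRingEnd ℂ) (ξ μ)‖ ^ 2) = ∑ j, ‖T j‖ ^ 2 :=
    Finset.sum_congr rfl fun j _ => by rw [hTgoal j]
  rw [hgoalL, hgoal2]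
  have hTn0 : (0:ℝ) ≤ ∑ j, ‖T j‖ ^ 2 := Finset.sum_nonneg fun j _ => by positivity
  have hX0 : (0:ℝ) ≤ Sf + F0 ^ 2 * Sg :=
    add_nonneg hSf0 (mul_nonneg (sq_nonneg F0) hSg0)
  have h5 : ‖∑ i, wder ν (R i) z * (starRingEnd ℂ) (T i)‖
      ≤ ∑ i, ‖wder ν (R i) z‖ * ‖T i‖ := by
    refine (norm_sum_le _ _).trans (le_of_eq (Finset.sum_congr rfl fun i _ => ?_))
    rw [norm_mul, RCLike.norm_conj]
  have h6 := Finset.sum_mul_sq_le_sq_mul_sq Finset.univ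
    (fun i => ‖wder ν (R i) z‖) (fun i => ‖T i‖)
  have h7 : (∑ i, ‖wder ν (R i) z‖ ^ 2) ≤ (m : ℝ) * (C₀ * (Sf + F0 ^ 2 * Sg)) := by
    refine le_trans (Finset.sum_le_card_nsmul Finset.univ _ _ (fun i _ => hBb i)) ?_
    simp only [Finset.card_univ, Fintype.card_fin, nsmul_eq_mul]
    exact le_refl _
  have h8 := pow_le_pow_left₀ (norm_nonneg _) h5 2
  calc ‖∑ i, wder ν (R i) z * (starRingEnd ℂ) (T i)‖ ^ 2
      ≤ (∑ i, ‖wder ν (R i) z‖ * ‖T i‖) ^ 2 := h8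
    _ ≤ (∑ i, ‖wder ν (R i) z‖ ^ 2) * ∑ i, ‖T i‖ ^ 2 := h6
    _ ≤ ((m : ℝ) * (C₀ * (Sf + F0 ^ 2 * Sg))) * ∑ i, ‖T i‖ ^ 2 :=
        mul_le_mul_of_nonneg_right h7 hTn0
    _ ≤ ((m : ℝ) * C₀ + 1) * (Sf + F0 ^ 2 * Sg) * ∑ i, ‖T i‖ ^ 2 := by
        nlinarith [mul_nonneg hX0 hTn0]
end MainProof
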